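/- Let (G,σ) be a binary-explainable BMG with vertex set L and set R^bin := R^bin(G,σ). Then, for any two distinct connected components C and C' of the Aho graph H := [R^bin, L], the subgraph of H induced by L' := V(C) ∪ V(C') equals the Aho graph [R^bin restricted to L', L'], and this graph is exactly the disjoint union of C and C'. -/

import Mathlib

/-- A rooted phylogenetic tree with leaf set `V`, encoded by its hierarchy of clusters
(the cluster of a vertex is the set of leaves below it; inner vertices of a phylogenetic
tree have at least two children, so vertices correspond bijectively to clusters). -/
structure PhyloTree (V : Type*) where
  clusters : Set (Set V)
  nonempty_of_mem : ∀ A ∈ clusters, A.Nonempty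
  univ_mem : Set.univ ∈ clusters
  singleton_mem : ∀ v : V, {v} ∈ clusters
  nested : ∀ A ∈ clusters, ∀ B ∈ clusters, A ⊆ B ∨ B ⊆ A ∨ Disjoint A B

namespace PhyloTree

variable {V : Type*}

/-- The cluster of the last common ancestor of `x` and `y`: the smallest cluster
containing both (the clusters containing `x` and `y` form a chain, so their
intersection is the smallest one). -/
def lca (T : PhyloTree V) (x y : V) : Set V :=
  ⋂₀ {A | A ∈ T.clusters ∧ x ∈ A ∧ y ∈ A}

/-- The rooted triple `xy|z` (on three pairwise distinct leaves) is displayed by `T`: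
`lca(x,y) ≺ lca(x,z) = lca(y,z)`. -/
def Displays (T : PhyloTree V) (x y z : V) : Prop :=
  x ≠ y ∧ x ≠ z ∧ y ≠ z ∧ T.lca x y ⊂ T.lca x z ∧ T.lca x z = T.lca y z

/-- `T` displays every triple of `R`; a triple `(x, y, z)` encodes `xy|z`. -/
def DisplaysSet (T : PhyloTree V) (R : Set (V × V × V)) : Prop :=
  ∀ t ∈ R, T.Displays t.1 t.2.1 t.2.2

/-- `r(T)`, the set of triples displayed by `T`. -/
def triples (T : PhyloTree V) : Set (V × V × V) :=
  {t | T.Displays t.1 t.2.1 t.2.2}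

/-- `T` is binary: every inner vertex (cluster with at least two leaves) has exactly
two children, i.e. splits into two disjoint proper subclusters. -/
def IsBinary (T : PhyloTree V) : Prop :=
  ∀ A ∈ T.clusters, 1 < A.ncard →
    ∃ B ∈ T.clusters, ∃ D ∈ T.clusters,
      Disjoint B D ∧ B ∪ D = A ∧ B ⊂ A ∧ D ⊂ A

/-- `T'` is a refinement of `T`: they have the same leaf set and `T` is obtained from
`T'` by contracting inner edges, i.e. every cluster of `T` is a cluster of `T'`. -/
def Refines (T' T : PhyloTree V) : Prop :=
  T.clusters ⊆ T'.clusters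

end PhyloTree

section BMG

variable {V C : Type*}

/-- `y` is a best match of `x` in the leaf-colored tree `(T,σ)`. -/
def bestMatch (T : PhyloTree V) (σ : V → C) (x y : V) : Prop :=
  σ x ≠ σ y ∧ ∀ y' : V, σ y' = σ y → T.lca x y ⊆ T.lca x y'

/-- The leaf-colored tree `(T,σ)` explains the vertex-colored digraph `(E,σ)`,
i.e. `(E,σ)` is the best match graph of `(T,σ)`. -/
def Explains (T : PhyloTree V) (σ : V → C) (E : V → V → Prop) : Prop :=
  ∀ x y, E x y ↔ bestMatch T σ x y

/-- `(E,σ)` is a best match graph. -/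
def IsBMG (E : V → V → Prop) (σ : V → C) : Prop :=
  ∃ T : PhyloTree V, Explains T σ E

/-- `(E,σ)` is binary-explainable. -/
def BinaryExplainable (E : V → V → Prop) (σ : V → C) : Prop :=
  ∃ T : PhyloTree V, T.IsBinary ∧ Explains T σ E

/-- The informative triples `R(G,σ)`: `(a,b,b')` encodes `ab|b'`. -/
def informativeTriples (E : V → V → Prop) (σ : V → C) : Set (V × V × V) :=
  {t | σ t.1 ≠ σ t.2.1 ∧ σ t.2.1 = σ t.2.2 ∧ E t.1 t.2.1 ∧ ¬ E t.1 t.2.2}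

/-- The forbidden triples `F(G,σ)`: `(a,b,b')` encodes `ab|b'`. -/
def forbiddenTriples (E : V → V → Prop) (σ : V → C) : Set (V × V × V) :=
  {t | σ t.1 ≠ σ t.2.1 ∧ σ t.2.1 = σ t.2.2 ∧ t.2.1 ≠ t.2.2 ∧ E t.1 t.2.1 ∧ E t.1 t.2.2}

/-- The extended triple set `R^bin(G,σ) = R(G,σ) ∪ {bb'|a : ab|b' ∈ F(G,σ)}`. -/
def Rbin (E : V → V → Prop) (σ : V → C) : Set (V × V × V) :=
  informativeTriples E σ ∪ {t | (t.2.2, t.1, t.2.1) ∈ forbiddenTriples E σ}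

/-- Properly colored: arcs only between vertices of distinct colors. -/
def ProperlyColored (E : V → V → Prop) (σ : V → C) : Prop :=
  ∀ x y, E x y → σ x ≠ σ y

/-- sf-colored: properly colored and every vertex has, for each color (of the graph)
different from its own, at least one out-neighbor of that color. -/
def SfColored (E : V → V → Prop) (σ : V → C) : Prop :=
  ProperlyColored E σ ∧ ∀ x y : V, σ y ≠ σ x → ∃ z, E x z ∧ σ z = σ y

/-- A triple set is consistent if some tree displays all of its triples. -/
def Consistent (R : Set (V × V × V)) : Prop :=
  ∃ T : PhyloTree V, T.DisplaysSet R

/-- The closure `cl(R)`: all triples displayed by every tree displaying `R`. -/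
def tripleClosure (R : Set (V × V × V)) : Set (V × V × V) :=
  {t | ∀ T : PhyloTree V, T.DisplaysSet R → T.Displays t.1 t.2.1 t.2.2}

/-- `(T,σ)` is a least resolved tree for `(E,σ)`: it explains `(E,σ)` and no tree
obtained from it by contracting an edge (i.e. by removing a non-root inner cluster)
explains `(E,σ)`. -/
def IsLRT (T : PhyloTree V) (σ : V → C) (E : V → V → Prop) : Prop :=
  Explains T σ E ∧
    ∀ A ∈ T.clusters, A ≠ Set.univ → 1 < A.ncard →
      ∀ T' : PhyloTree V, T'.clusters = T.clusters \ {A} → ¬ Explains T' σ E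

end BMG

section Aho

variable {V : Type*}

/-- Adjacency in the Aho graph `[R,L]`: `x` and `y` are joined whenever `xy|z ∈ R`
for some `z ∈ L` (only triples with all leaves in `L` are taken into account). -/
def ahoAdj (R : Set (V × V × V)) (L : Set V) (x y : V) : Prop :=
  x ∈ L ∧ y ∈ L ∧ ∃ z ∈ L, (x, y, z) ∈ R ∨ (y, x, z) ∈ R

/-- The vertex set of the connected component of `x` in the Aho graph `[R,L]`. -/
def ahoComponent (R : Set (V × V × V)) (L : Set V) (x : V) : Set V :=
  {y | Relation.ReflTransGen (ahoAdj R L) x y}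

/-- The clusters of the Aho tree `Aho(R, V)`: the full leaf set, and recursively the
connected components of the Aho graphs. -/
inductive IsAhoCluster (R : Set (V × V × V)) : Set V → Prop
  | univ : IsAhoCluster R Set.univ
  | component {L : Set V} {x : V} :
      IsAhoCluster R L → x ∈ L → IsAhoCluster R (ahoComponent R L x)

/-- `T` is the Aho tree (`BUILD` tree) of the triple set `R` on the full leaf set. -/
def IsAhoTree (R : Set (V × V × V)) (T : PhyloTree V) : Prop :=
  T.clusters = {A | IsAhoCluster R A}

/-- The union of the leaf sets of the triples in `R`. -/
def tripleLeaves (R : Set (V × V × V)) : Set V :=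
  {v | ∃ t ∈ R, v = t.1 ∨ v = t.2.1 ∨ v = t.2.2}

end Aho

section Stmt8Aux

variable {V Γ : Type*} [Fintype V]

/-- The lca is a cluster containing both leaves. -/
lemma lca_spec (T : PhyloTree V) (x w : V) :
    T.lca x w ∈ T.clusters ∧ x ∈ T.lca x w ∧ w ∈ T.lca x w := by
  classical
  have hfin : ({A | A ∈ T.clusters ∧ x ∈ A ∧ w ∈ A} : Set (Set V)).Finite := Set.toFinite _
  have hne : ({A | A ∈ T.clusters ∧ x ∈ A ∧ w ∈ A} : Set (Set V)).Nonempty :=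
    ⟨Set.univ, T.univ_mem, Set.mem_univ _, Set.mem_univ _⟩
  obtain ⟨m, hm, hmin⟩ := Set.Finite.exists_minimalFor id _ hfin hne
  have hleast : ∀ B ∈ ({A | A ∈ T.clusters ∧ x ∈ A ∧ w ∈ A} : Set (Set V)), m ⊆ B := by
    intro B hB
    rcases T.nested m hm.1 B hB.1 with h | h | h
    · exact h
    · exact hmin hB h
    · exact absurd hB.2.1 (Set.disjoint_left.mp h hm.2.1)
  have hlca : T.lca x w = m :=
    subset_antisymm (Set.sInter_subset_of_mem hm) (Set.subset_sInter hleast)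
  exact ⟨hlca ▸ hm.1, hlca ▸ hm.2.1, hlca ▸ hm.2.2⟩

/-- Two lcas sharing a leaf are comparable. -/
lemma lca_comparable (T : PhyloTree V) (x w w' : V) :
    T.lca x w ⊆ T.lca x w' ∨ T.lca x w' ⊆ T.lca x w := by
  obtain ⟨h1, hx1, -⟩ := lca_spec T x w
  obtain ⟨h2, hx2, -⟩ := lca_spec T x w'
  rcases T.nested _ h1 _ h2 with h | h | h
  · exact Or.inl h
  · exact Or.inr h
  · exact absurd hx2 (Set.disjoint_left.mp h hx1)

/-- A BMG is sf-colored: every vertex has an out-neighbor of every other color. -/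
lemma exists_best_match {E : V → V → Prop} {σ : V → Γ} (T : PhyloTree V)
    (hex : Explains T σ E) (x c : V) (hc : σ c ≠ σ x) : ∃ w, E x w ∧ σ w = σ c := by
  classical
  have hfin : ({w : V | σ w = σ c}).Finite := Set.toFinite _
  have hne : ({w : V | σ w = σ c}).Nonempty := ⟨c, rfl⟩
  obtain ⟨m, hm, hmin⟩ := Set.Finite.exists_minimalFor (fun w => T.lca x w) _ hfin hne
  refine ⟨m, (hex x m).mpr ⟨?_, ?_⟩, hm⟩
  · intro h; exact hc (hm.symm.trans h.symm)
  · intro y' hy'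
    rcases lca_comparable T x m y' with h | h
    · exact h
    · exact hmin (show σ y' = σ c from hy'.trans hm) h

lemma ahoAdj_symm {R : Set (V × V × V)} {L : Set V} {a b : V}
    (h : ahoAdj R L a b) : ahoAdj R L b a := by
  obtain ⟨ha, hb, z, hz, h⟩ := h
  exact ⟨hb, ha, z, hz, h.symm⟩

lemma comp_closed {R : Set (V × V × V)} {L : Set V} {x a b : V}
    (ha : a ∈ ahoComponent R L x) (h : ahoAdj R L a b) : b ∈ ahoComponent R L x :=
  Relation.ReflTransGen.tail ha h

lemma comp_eq {R : Set (V × V × V)} {L : Set V} {x a : V} (ha : a ∈ ahoComponent R L x) :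
    ahoComponent R L x = ahoComponent R L a := by
  have hsym : Symmetric (Relation.ReflTransGen (ahoAdj R L)) :=
    by haveI : Std.Symm (ahoAdj R L) := ⟨fun _ _ h => ahoAdj_symm h⟩
       exact fun a b h => Std.Symm.symm a b h
  ext w
  exact ⟨fun hw => Relation.ReflTransGen.trans (hsym ha) hw,
    fun hw => Relation.ReflTransGen.trans ha hw⟩

/-- Case A of the key argument: an informative witness triple whose third leaf escapes
`C1 ∪ C2` can be replaced by a witness inside `C1 ∪ C2`. -/
lemma caseA {E : V → V → Prop} {σ : V → Γ}
    (hsf : ∀ x c : V, σ c ≠ σ x → ∃ w, E x w ∧ σ w = σ c)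
    {C1 C2 : Set V}
    (hC1 : ∀ a b, a ∈ C1 → ahoAdj (Rbin E σ) Set.univ a b → b ∈ C1)
    (hC2 : ∀ a b, a ∈ C2 → ahoAdj (Rbin E σ) Set.univ a b → b ∈ C2)
    (hdisj : Disjoint C1 C2) {y2 : V} (hy2 : y2 ∈ C2)
    {u v z : V} (hu : u ∈ C1) (hv : v ∈ C1)
    (hinf : (u, v, z) ∈ informativeTriples E σ) (hzL : z ∉ C1 ∪ C2) :
    ∃ z' ∈ C1 ∪ C2, (u, v, z') ∈ Rbin E σ := by
  obtain ⟨h1, h2, h3, h4⟩ := hinf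
  by_cases hwit : ∃ z' ∈ C1 ∪ C2, σ z' = σ v ∧ ¬ E u z'
  · obtain ⟨z', hz', hσ, hE⟩ := hwit
    exact ⟨z', hz', Or.inl ⟨h1, hσ.symm, h3, hE⟩⟩
  · exfalso
    push_neg at hwit
    -- no vertex of C2 has the color of `v`
    have step1 : ∀ c ∈ C2, σ c ≠ σ v := by
      intro c hc hσc
      have hEuc : E u c := hwit c (Or.inr hc) hσc
      have hvc : v ≠ c := fun h => Set.disjoint_left.mp hdisj (h ▸ hv) hc
      have hF : (v, c, u) ∈ Rbin E σ :=
        Or.inr (show (u, v, c) ∈ forbiddenTriples E σ from ⟨h1, hσc.symm, hvc, h3, hEuc⟩)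
      have : c ∈ C1 := hC1 v c hv ⟨trivial, trivial, u, trivial, Or.inl hF⟩
      exact Set.disjoint_left.mp hdisj this hc
    have step2 : σ y2 ≠ σ v := step1 y2 hy2
    obtain ⟨d, hEd, hσd⟩ := hsf y2 v step2.symm
    -- y2 is out-adjacent to every vertex of color σ v
    have step3 : ∀ w, σ w = σ v → E y2 w := by
      intro w hσw
      by_contra hnE
      have hinf2 : (y2, d, w) ∈ Rbin E σ :=
        Or.inl ⟨fun h => step2 (h.trans hσd), hσd.trans hσw.symm, hEd, hnE⟩
      have hd2 : d ∈ C2 := hC2 y2 d hy2 ⟨trivial, trivial, w, trivial, Or.inl hinf2⟩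
      exact step1 d hd2 hσd
    have hvz : v ≠ z := fun h => hzL (Or.inl (h ▸ hv))
    have hF : (v, z, y2) ∈ Rbin E σ :=
      Or.inr (show (y2, v, z) ∈ forbiddenTriples E σ from
        ⟨step2, h2, hvz, step3 v rfl, step3 z h2.symm⟩)
    have : z ∈ C1 := hC1 v z hv ⟨trivial, trivial, y2, trivial, Or.inl hF⟩
    exact hzL (Or.inl this)

/-- Case B of the key argument: a forbidden-type witness triple whose third leaf escapes
`C1 ∪ C2` can be replaced by a witness inside `C1 ∪ C2`. -/
lemma caseB {E : V → V → Prop} {σ : V → Γ}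
    (hsf : ∀ x c : V, σ c ≠ σ x → ∃ w, E x w ∧ σ w = σ c)
    {C1 C2 : Set V}
    (hC1 : ∀ a b, a ∈ C1 → ahoAdj (Rbin E σ) Set.univ a b → b ∈ C1)
    (hC2 : ∀ a b, a ∈ C2 → ahoAdj (Rbin E σ) Set.univ a b → b ∈ C2)
    (hdisj : Disjoint C1 C2) {y2 : V} (hy2 : y2 ∈ C2)
    {u v z : V} (hu : u ∈ C1) (hv : v ∈ C1)
    (hF : (z, u, v) ∈ forbiddenTriples E σ) (hzL : z ∉ C1 ∪ C2) :
    ∃ c ∈ C1 ∪ C2, (u, v, c) ∈ Rbin E σ := by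
  obtain ⟨h1, h2, h3, h4, h5⟩ := hF
  -- z is out-adjacent to every vertex of color σ u
  have step1 : ∀ w, σ w = σ u → E z w := by
    intro w hσw
    by_contra hnE
    have hinf : (z, u, w) ∈ Rbin E σ := Or.inl ⟨h1, hσw.symm, h4, hnE⟩
    have hzC1 : z ∈ C1 :=
      hC1 u z hu (ahoAdj_symm ⟨trivial, trivial, w, trivial, Or.inl hinf⟩)
    exact hzL (Or.inl hzC1)
  -- no vertex of C2 has the color of `u`
  have step2 : ∀ c ∈ C2, σ c ≠ σ u := by
    intro c hc hσc
    have hEzc : E z c := step1 c hσc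
    have huc : u ≠ c := fun h => Set.disjoint_left.mp hdisj (h ▸ hu) hc
    have hF2 : (u, c, z) ∈ Rbin E σ :=
      Or.inr (show (z, u, c) ∈ forbiddenTriples E σ from ⟨h1, hσc.symm, huc, h4, hEzc⟩)
    have : c ∈ C1 := hC1 u c hu ⟨trivial, trivial, z, trivial, Or.inl hF2⟩
    exact Set.disjoint_left.mp hdisj this hc
  have step3 : σ y2 ≠ σ u := step2 y2 hy2
  obtain ⟨d, hEd, hσd⟩ := hsf y2 u step3.symm
  -- y2 is out-adjacent to every vertex of color σ u
  have step4 : ∀ w, σ w = σ u → E y2 w := by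
    intro w hσw
    by_contra hnE
    have hinf : (y2, d, w) ∈ Rbin E σ :=
      Or.inl ⟨fun h => step3 (h.trans hσd), hσd.trans hσw.symm, hEd, hnE⟩
    have hd2 : d ∈ C2 := hC2 y2 d hy2 ⟨trivial, trivial, w, trivial, Or.inl hinf⟩
    exact step2 d hd2 hσd
  exact ⟨y2, Or.inr hy2,
    Or.inr (show (y2, u, v) ∈ forbiddenTriples E σ from
      ⟨step3, h2, h3, step4 u rfl, step4 v h2.symm⟩)⟩

/-- Core lemma: an Aho edge inside `C1` has a witness triple with third leaf in `C1 ∪ C2`. -/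
lemma core {E : V → V → Prop} {σ : V → Γ}
    (hsf : ∀ x c : V, σ c ≠ σ x → ∃ w, E x w ∧ σ w = σ c)
    {C1 C2 : Set V}
    (hC1 : ∀ a b, a ∈ C1 → ahoAdj (Rbin E σ) Set.univ a b → b ∈ C1)
    (hC2 : ∀ a b, a ∈ C2 → ahoAdj (Rbin E σ) Set.univ a b → b ∈ C2)
    (hdisj : Disjoint C1 C2) {y2 : V} (hy2 : y2 ∈ C2)
    {u v z : V} (hu : u ∈ C1) (hv : v ∈ C1)
    (htrip : (u, v, z) ∈ Rbin E σ ∨ (v, u, z) ∈ Rbin E σ) (hzL : z ∉ C1 ∪ C2) :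
    ∃ z' ∈ C1 ∪ C2, (u, v, z') ∈ Rbin E σ ∨ (v, u, z') ∈ Rbin E σ := by
  rcases htrip with h | h
  · rcases h with h | h
    · obtain ⟨z', hz', h'⟩ := caseA hsf hC1 hC2 hdisj hy2 hu hv h hzL
      exact ⟨z', hz', Or.inl h'⟩
    · obtain ⟨c, hc, h'⟩ :=
        caseB hsf hC1 hC2 hdisj hy2 hu hv (show (z, u, v) ∈ forbiddenTriples E σ from h) hzL
      exact ⟨c, hc, Or.inl h'⟩
  · rcases h with h | h
    · obtain ⟨z', hz', h'⟩ := caseA hsf hC1 hC2 hdisj hy2 hv hu h hzL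
      exact ⟨z', hz', Or.inr h'⟩
    · obtain ⟨c, hc, h'⟩ :=
        caseB hsf hC1 hC2 hdisj hy2 hv hu (show (z, v, u) ∈ forbiddenTriples E σ from h) hzL
      exact ⟨c, hc, Or.inr h'⟩

end Stmt8Aux

/-- Lemma: Rbin-triple-components.
Let `(G,σ)` be a binary-explainable BMG with vertex set `L` and `R^bin := R^bin(G,σ)`.
Then, for any two distinct connected components `C` and `C'` of the Aho graph
`H := [R^bin, L]`, the subgraph of `H` induced by `L' := V(C) ∪ V(C')` equals the Aho
graph `[R^bin restricted to L', L']`, and this graph is exactly the disjoint union of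
`C` and `C'` (i.e. its connected components are precisely `C` and `C'`). -/
theorem stmt8 {V Γ : Type*} [Fintype V] (E : V → V → Prop) (σ : V → Γ)
    (hbe : BinaryExplainable E σ)
    (x y : V) (Cx Cy L' : Set V)
    (hCx : Cx = ahoComponent (Rbin E σ) Set.univ x)
    (hCy : Cy = ahoComponent (Rbin E σ) Set.univ y)
    (hne : Cx ≠ Cy) (hL' : L' = Cx ∪ Cy) :
    (∀ u v : V,
        (u ∈ L' ∧ v ∈ L' ∧ ahoAdj (Rbin E σ) Set.univ u v) ↔ ahoAdj (Rbin E σ) L' u v) ∧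
    Disjoint Cx Cy ∧
    (∀ u ∈ Cx, ahoComponent (Rbin E σ) L' u = Cx) ∧
    (∀ u ∈ Cy, ahoComponent (Rbin E σ) L' u = Cy) := by
  classical
  obtain ⟨T, -, hex⟩ := hbe
  have hsf : ∀ a c : V, σ c ≠ σ a → ∃ w, E a w ∧ σ w = σ c :=
    fun a c h => exists_best_match T hex a c h
  set R := Rbin E σ with hR
  have hxCx : x ∈ Cx := by rw [hCx]; exact Relation.ReflTransGen.refl
  have hyCy : y ∈ Cy := by rw [hCy]; exact Relation.ReflTransGen.refl
  have hCxc : ∀ a b, a ∈ Cx → ahoAdj R Set.univ a b → b ∈ Cx := by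
    intro a b ha hab
    rw [hCx] at ha ⊢
    exact comp_closed ha hab
  have hCyc : ∀ a b, a ∈ Cy → ahoAdj R Set.univ a b → b ∈ Cy := by
    intro a b ha hab
    rw [hCy] at ha ⊢
    exact comp_closed ha hab
  have hdisj : Disjoint Cx Cy := by
    rw [Set.disjoint_left]
    intro w hwx hwy
    apply hne
    have e1 : Cx = ahoComponent R Set.univ w := by
      rw [hCx]; exact comp_eq (by rw [← hCx]; exact hwx)
    have e2 : Cy = ahoComponent R Set.univ w := by
      rw [hCy]; exact comp_eq (by rw [← hCy]; exact hwy)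
    rw [e1, e2]
  -- the hard direction
  have hard : ∀ u v, u ∈ L' → v ∈ L' → ahoAdj R Set.univ u v → ahoAdj R L' u v := by
    intro u v hu hv hadj
    obtain ⟨-, -, z, -, htrip⟩ := hadj
    by_cases hzL : z ∈ L'
    · exact ⟨hu, hv, z, hzL, htrip⟩
    · have huL := hu
      rw [hL'] at huL hzL
      rcases huL with huC | huC
      · have hvC : v ∈ Cx := hCxc u v huC ⟨trivial, trivial, z, trivial, htrip⟩
        obtain ⟨z', hz', h'⟩ := core hsf hCxc hCyc hdisj hyCy huC hvC htrip hzL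
        exact ⟨hu, hv, z', by rw [hL']; exact hz', h'⟩
      · have hvC : v ∈ Cy := hCyc u v huC ⟨trivial, trivial, z, trivial, htrip⟩
        have hzL' : z ∉ Cy ∪ Cx := by rw [Set.union_comm]; exact hzL
        obtain ⟨z', hz', h'⟩ := core hsf hCyc hCxc hdisj.symm hxCx huC hvC htrip hzL'
        rw [Set.union_comm] at hz'
        exact ⟨hu, hv, z', by rw [hL']; exact hz', h'⟩
  -- induced subgraph = restricted Aho graph
  have hiff : ∀ u v : V,
      (u ∈ L' ∧ v ∈ L' ∧ ahoAdj R Set.univ u v) ↔ ahoAdj R L' u v := by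
    intro u v
    constructor
    · rintro ⟨hu, hv, hadj⟩
      exact hard u v hu hv hadj
    · rintro ⟨hu, hv, z, hz, htrip⟩
      exact ⟨hu, hv, trivial, trivial, z, trivial, htrip⟩
  -- components of the restricted graph
  have hcomp : ∀ (C : Set V) (x0 : V), C = ahoComponent R Set.univ x0 → C ⊆ L' →
      ∀ u ∈ C, ahoComponent R L' u = C := by
    intro C x0 hC hsub u hu
    have hCc : ∀ a b, a ∈ C → ahoAdj R Set.univ a b → b ∈ C := by
      intro a b ha hab
      rw [hC] at ha ⊢
      exact comp_closed ha hab
    have hsym : Symmetric (Relation.ReflTransGen (ahoAdj R L')) :=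
      by haveI : Std.Symm (ahoAdj R L') := ⟨fun _ _ h => ahoAdj_symm h⟩
         exact fun a b h => Std.Symm.symm a b h
    -- any member of C is reachable from x0 in the restricted graph
    have key : ∀ w ∈ C, Relation.ReflTransGen (ahoAdj R L') x0 w := by
      intro w hw
      rw [hC] at hw
      replace hw : Relation.ReflTransGen (ahoAdj R Set.univ) x0 w := hw
      induction hw with
      | refl => exact Relation.ReflTransGen.refl
      | @tail p q hp hadj ih =>
        have hpC : p ∈ C := by rw [hC]; exact hp
        have hqC : q ∈ C := hCc p q hpC hadj
        exact ih.tail (hard p q (hsub hpC) (hsub hqC) hadj)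
    apply Set.Subset.antisymm
    · intro w hw
      replace hw : Relation.ReflTransGen (ahoAdj R L') u w := hw
      have hw' : Relation.ReflTransGen (ahoAdj R Set.univ) u w := by
        induction hw with
        | refl => exact Relation.ReflTransGen.refl
        | tail hp hadj ih =>
          exact ih.tail ⟨trivial, trivial, hadj.2.2.choose, trivial, hadj.2.2.choose_spec.2⟩
      have : ahoComponent R Set.univ x0 = ahoComponent R Set.univ u :=
        comp_eq (by rw [← hC]; exact hu)
      rw [hC, this]
      exact hw'
    · intro w hw
      exact Relation.ReflTransGen.trans (hsym (key u hu)) (key w hw)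
  refine ⟨hiff, hdisj, ?_, ?_⟩
  · exact fun u hu => hcomp Cx x hCx (by rw [hL']; exact Set.subset_union_left) u hu
  · exact fun u hu => hcomp Cy y hCy (by rw [hL']; exact Set.subset_union_right) u hu
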